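/- Total additivity of the twisted extremal Kostant degree in type B: let n ≥ 2, let λ and μ be dominant weights of B_n, and let w be any signed permutation of {1,…,n}. Then n^ν(λ + μ, w) = n^ν(λ, w) + n^ν(μ, w). -/

import Mathlib

/-- The short positive roots of type `B_n` in `ℝ^n`: the vectors `ε_i`. -/
def typeBShortRoots (n : ℕ) : Set (Fin n → ℝ) :=
  {v | ∃ i : Fin n, v = Pi.single i 1}

/-- The long positive roots of type `B_n` in `ℝ^n`: the vectors `ε_i - ε_j` and
`ε_i + ε_j` for `i < j`. -/
def typeBLongRoots (n : ℕ) : Set (Fin n → ℝ) :=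
  {v | ∃ i j : Fin n, i < j ∧
    (v = Pi.single i 1 - Pi.single j 1 ∨ v = Pi.single i 1 + Pi.single j 1)}

/-- The set of twisted weights `ν_{β₁} + ⋯ + ν_{β_M}` of decompositions of `v` into
positive roots of `B_n` (with repetitions), where `ν_β = 1` for short `β` and
`ν_β = 2` for long `β`.  A decomposition is encoded as a list of pairs
`(β, ν_β)`. -/
def typeBTwistedWeights (n : ℕ) (v : Fin n → ℝ) : Set ℕ :=
  {N | ∃ l : List ((Fin n → ℝ) × ℕ),
    (∀ p ∈ l, (p.1 ∈ typeBShortRoots n ∧ p.2 = 1) ∨ (p.1 ∈ typeBLongRoots n ∧ p.2 = 2)) ∧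
    (l.map Prod.fst).sum = v ∧ (l.map Prod.snd).sum = N}

/-- A dominant weight of `B_n`: `λ₁ ≥ ⋯ ≥ λ_n ≥ 0` with all entries integers or all
entries in `ℤ + 1/2`. -/
def IsDominantB (n : ℕ) (lam : Fin n → ℝ) : Prop :=
  (∀ i j : Fin n, i ≤ j → lam j ≤ lam i) ∧ (∀ i, 0 ≤ lam i) ∧
    ((∀ i, ∃ k : ℤ, lam i = k) ∨ (∀ i, ∃ k : ℤ, lam i = k + 1/2))

/-- Total additivity of the twisted extremal Kostant degree in type `B_n`:
for dominant weights `λ, μ` and any signed permutation `w` (encoded by a permutation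
`σ` and signs `s i ∈ {±1}`, acting by `w(ε_i) = s(i) • ε_{σ(i)}`),
`n^ν(λ + μ, w) = n^ν(λ, w) + n^ν(μ, w)`. -/
-- ℓ¹ norm of a root is bounded by its ν weight
lemma l1_root {n : ℕ} (p : (Fin n → ℝ) × ℕ)
    (hp : (p.1 ∈ typeBShortRoots n ∧ p.2 = 1) ∨ (p.1 ∈ typeBLongRoots n ∧ p.2 = 2)) :
    ∑ j, |p.1 j| ≤ (p.2 : ℝ) := by
  rcases hp with ⟨⟨i, hi⟩, h2⟩ | ⟨⟨i, j, hij, hv⟩, h2⟩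
  · rw [hi, h2]
    have : ∀ k, |(Pi.single i 1 : Fin n → ℝ) k| = (Pi.single i 1 : Fin n → ℝ) k := by
      intro k
      rcases eq_or_ne k i with rfl | h
      · simp
      · simp [Pi.single_eq_of_ne h]
    simp only [this]
    rw [Finset.sum_pi_single']
    simp
  · have hne : i ≠ j := ne_of_lt hij
    rw [h2]
    have key : ∀ k, |p.1 k| = (Pi.single i 1 : Fin n → ℝ) k + (Pi.single j 1 : Fin n → ℝ) k := by
      intro k
      rcases eq_or_ne k i with rfl | hki
      · rcases hv with hv | hv <;> rw [hv] <;>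
          simp [Pi.single_eq_of_ne hne, Pi.single_eq_of_ne (Ne.symm hne)]
      · rcases eq_or_ne k j with rfl | hkj
        · rcases hv with hv | hv <;> rw [hv] <;>
            simp [Pi.single_eq_of_ne hne, Pi.single_eq_of_ne (Ne.symm hne)]
        · rcases hv with hv | hv <;> rw [hv] <;>
            simp [Pi.single_eq_of_ne hki, Pi.single_eq_of_ne hkj]
    simp only [key]
    rw [Finset.sum_add_distrib, Finset.sum_pi_single', Finset.sum_pi_single']
    norm_num

-- lower bound: any twisted weight is at least the ℓ¹ norm
lemma l1_lower {n : ℕ} (v : Fin n → ℝ) (N : ℕ) (hN : N ∈ typeBTwistedWeights n v) :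
    ∑ j, |v j| ≤ (N : ℝ) := by
  obtain ⟨l, hl, hsum, hN⟩ := hN
  subst hsum hN
  induction l with
  | nil => simp
  | cons p l ih =>
    have hp := hl p List.mem_cons_self
    have ih' := ih (fun q hq => hl q (List.mem_cons_of_mem p hq))
    simp only [List.map_cons, List.sum_cons, Nat.cast_add]
    calc ∑ j, |(p.1 + (l.map Prod.fst).sum) j|
        ≤ ∑ j, (|p.1 j| + |(l.map Prod.fst).sum j|) := by
          apply Finset.sum_le_sum; intro j _; exact abs_add_le _ _
      _ = (∑ j, |p.1 j|) + ∑ j, |(l.map Prod.fst).sum j| := Finset.sum_add_distrib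
      _ ≤ (p.2 : ℝ) + ((l.map Prod.snd).sum : ℝ) := add_le_add (l1_root p hp) ih'

-- additivity of membership
lemma mem_add {n : ℕ} {v w : Fin n → ℝ} {a b : ℕ} (ha : a ∈ typeBTwistedWeights n v)
    (hb : b ∈ typeBTwistedWeights n w) : (a + b) ∈ typeBTwistedWeights n (v + w) := by
  obtain ⟨l₁, hl₁, hs₁, hn₁⟩ := ha
  obtain ⟨l₂, hl₂, hs₂, hn₂⟩ := hb
  refine ⟨l₁ ++ l₂, ?_, ?_, ?_⟩
  · intro p hp
    rcases List.mem_append.1 hp with h | h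
    · exact hl₁ p h
    · exact hl₂ p h
  · simp [List.sum_append, hs₁, hs₂]
  · simp [List.sum_append, hn₁, hn₂]

lemma attain {n : ℕ} (N : ℕ) : ∀ m : Fin n → ℤ, (∑ i, (m i).natAbs) = N →
    (∀ k : Fin n, 0 ≤ ∑ i ∈ Finset.Iic k, m i) →
    (∑ i, (m i).natAbs) ∈ typeBTwistedWeights n (fun i => (m i : ℝ)) := by
  induction N using Nat.strong_induction_on with
  | _ N ih =>
  intro m hN hpre
  by_cases hneg : ∃ j, m j < 0
  · -- there is a negative entry
    set S := Finset.univ.filter (fun j => m j < 0) with hSdef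
    have hS : S.Nonempty := by
      obtain ⟨j, hj⟩ := hneg
      exact ⟨j, by simp [hSdef, hj]⟩
    set j := S.min' hS with hjdef
    have hjneg : m j < 0 := by
      have := S.min'_mem hS
      simp [hSdef] at this
      exact this
    have hjmin : ∀ k, m k < 0 → j ≤ k := by
      intro k hk
      exact S.min'_le k (by simp [hSdef, hk])
    have hnnlt : ∀ k, k < j → 0 ≤ m k := by
      intro k hk
      by_contra h
      exact absurd (hjmin k (by omega)) (by omega)
    -- find a positive entry before j
    have hex : ∃ i, i < j ∧ 0 < m i := by
      by_contra h
      push_neg at h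
      have h0 : ∀ k, k < j → m k = 0 := by
        intro k hk
        have := hnnlt k hk
        have := h k hk
        omega
      have hIic : ∑ x ∈ Finset.Iic j, m x < 0 := by
        rw [← Finset.Iio_insert, Finset.sum_insert (by simp)]
        rw [Finset.sum_eq_zero (fun x hx => h0 x (Finset.mem_Iio.1 hx))]
        omega
      exact absurd (hpre j) (by omega)
    obtain ⟨i, hij, hipos⟩ := hex
    have hne : i ≠ j := ne_of_lt hij
    set m' : Fin n → ℤ := m - Pi.single i 1 + Pi.single j 1 with hm'
    have hm'app : ∀ k, m' k = m k - (if k = i then 1 else 0) + (if k = j then 1 else 0) := by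
      intro k
      simp [hm', Pi.single_apply]
    have habs : ∀ k, ((m k).natAbs : ℤ) =
        ((m' k).natAbs : ℤ) + ((if k = i then 1 else 0) + (if k = j then 1 else 0)) := by
      intro k
      have hk := hm'app k
      rcases eq_or_ne k i with rfl | hki
      · simp only [if_pos rfl, if_neg hne] at hk ⊢
        rw [Int.natAbs_of_nonneg (by omega), Int.natAbs_of_nonneg (by omega)]
        omega
      · rcases eq_or_ne k j with rfl | hkj
        · simp only [if_neg hki, if_pos rfl] at hk ⊢
          omega
        · simp only [if_neg hki, if_neg hkj] at hk ⊢
          omega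
    have hsumabs : ∑ k, (m k).natAbs = (∑ k, (m' k).natAbs) + 2 := by
      have hz : (∑ k, ((m k).natAbs : ℤ)) = (∑ k, ((m' k).natAbs : ℤ)) + 2 := by
        rw [Finset.sum_congr rfl (fun k _ => habs k), Finset.sum_add_distrib,
          Finset.sum_add_distrib, Finset.sum_ite_eq' Finset.univ i (fun _ => (1:ℤ)),
          Finset.sum_ite_eq' Finset.univ j (fun _ => (1:ℤ))]
        simp
      exact_mod_cast hz
    have hpre' : ∀ k : Fin n, 0 ≤ ∑ x ∈ Finset.Iic k, m' x := by
      intro k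
      have hsum : ∑ x ∈ Finset.Iic k, m' x = (∑ x ∈ Finset.Iic k, m x)
          - (if i ≤ k then 1 else 0) + (if j ≤ k then 1 else 0) := by
        rw [Finset.sum_congr rfl (fun x _ => hm'app x), Finset.sum_add_distrib,
          Finset.sum_sub_distrib, Finset.sum_ite_eq' (Finset.Iic k) i (fun _ => (1:ℤ)),
          Finset.sum_ite_eq' (Finset.Iic k) j (fun _ => (1:ℤ))]
        simp [Finset.mem_Iic]
      rw [hsum]
      have hPk := hpre k
      by_cases h1 : i ≤ k
      · by_cases h2 : j ≤ k
        · simp [h1, h2]; omega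
        · have hkj : k < j := by omega
          have hone : m i ≤ ∑ x ∈ Finset.Iic k, m x := by
            apply Finset.single_le_sum (f := m) (fun x hx => hnnlt x (by
              have := Finset.mem_Iic.1 hx; omega)) (Finset.mem_Iic.2 h1)
          simp [h1, h2]; omega
      · by_cases h2 : j ≤ k <;> simp [h1, h2] <;> omega
    have hlt : ∑ k, (m' k).natAbs < N := by omega
    obtain ⟨l, hl, hsum, hw⟩ := ih _ hlt m' rfl hpre'
    refine ⟨((Pi.single i 1 : Fin n → ℝ) - Pi.single j 1, 2) :: l, ?_, ?_, ?_⟩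
    · intro p hp
      rcases List.mem_cons.1 hp with rfl | hp
      · exact Or.inr ⟨⟨i, j, hij, Or.inl rfl⟩, rfl⟩
      · exact hl p hp
    · rw [List.map_cons, List.sum_cons, hsum]
      funext k
      have h2 : ((m' k : ℤ) : ℝ) = (m k : ℝ)
          - (if k = i then 1 else 0) + (if k = j then 1 else 0) := by
        rw [hm'app k]
        push_cast
        split_ifs <;> norm_num
      simp only [Pi.add_apply, Pi.sub_apply, Pi.single_apply, h2]
      split_ifs <;> ring
    · rw [List.map_cons, List.sum_cons, hw]
      omega
  · by_cases hpos : ∃ j, 0 < m j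
    · obtain ⟨j, hjpos⟩ := hpos
      push_neg at hneg
      set m' : Fin n → ℤ := m - Pi.single j 1 with hm'
      have hm'app : ∀ k, m' k = m k - (if k = j then 1 else 0) := by
        intro k
        simp [hm', Pi.single_apply]
      have habs : ∀ k, ((m k).natAbs : ℤ) =
          ((m' k).natAbs : ℤ) + (if k = j then 1 else 0) := by
        intro k
        have hk := hm'app k
        rcases eq_or_ne k j with rfl | hkj
        · simp only [if_pos rfl] at hk ⊢
          rw [Int.natAbs_of_nonneg (by omega), Int.natAbs_of_nonneg (by omega)]
          omega
        · simp only [if_neg hkj] at hk ⊢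
          omega
      have hsumabs : ∑ k, (m k).natAbs = (∑ k, (m' k).natAbs) + 1 := by
        have hz : (∑ k, ((m k).natAbs : ℤ)) = (∑ k, ((m' k).natAbs : ℤ)) + 1 := by
          rw [Finset.sum_congr rfl (fun k _ => habs k), Finset.sum_add_distrib,
            Finset.sum_ite_eq' Finset.univ j (fun _ => (1:ℤ))]
          simp
        exact_mod_cast hz
      have hpre' : ∀ k : Fin n, 0 ≤ ∑ x ∈ Finset.Iic k, m' x := by
        intro k
        have hsum : ∑ x ∈ Finset.Iic k, m' x = (∑ x ∈ Finset.Iic k, m x)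
            - (if j ≤ k then 1 else 0) := by
          rw [Finset.sum_congr rfl (fun x _ => hm'app x), Finset.sum_sub_distrib,
            Finset.sum_ite_eq' (Finset.Iic k) j (fun _ => (1:ℤ))]
          simp [Finset.mem_Iic]
        rw [hsum]
        by_cases h1 : j ≤ k
        · have hone : m j ≤ ∑ x ∈ Finset.Iic k, m x := by
            apply Finset.single_le_sum (f := m) (fun x _ => hneg x) (Finset.mem_Iic.2 h1)
          simp [h1]; omega
        · have := hpre k
          simp [h1]; omega
      have hlt : ∑ k, (m' k).natAbs < N := by omega
      obtain ⟨l, hl, hsum, hw⟩ := ih _ hlt m' rfl hpre'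
      refine ⟨((Pi.single j 1 : Fin n → ℝ), 1) :: l, ?_, ?_, ?_⟩
      · intro p hp
        rcases List.mem_cons.1 hp with rfl | hp
        · exact Or.inl ⟨⟨j, rfl⟩, rfl⟩
        · exact hl p hp
      · rw [List.map_cons, List.sum_cons, hsum]
        funext k
        have h2 : ((m' k : ℤ) : ℝ) = (m k : ℝ) - (if k = j then 1 else 0) := by
          rw [hm'app k]
          push_cast
          split_ifs <;> norm_num
        simp only [Pi.add_apply, Pi.single_apply, h2]
        split_ifs <;> ring
      · rw [List.map_cons, List.sum_cons, hw]
        omega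
    · push_neg at hneg hpos
      have h0 : ∀ k, m k = 0 := fun k => le_antisymm (hpos k) (hneg k)
      refine ⟨[], by simp, ?_, ?_⟩
      · funext k
        simp [h0 k]
      · simp [h0]



-- rearrangement: sum of lam over any set of given card ≤ sum over the prefix Iic k
lemma prefix_max (lam : Fin n → ℝ) (h1 : ∀ i j : Fin n, i ≤ j → lam j ≤ lam i)
    (k : Fin n) (G : Finset (Fin n)) (hcard : G.card = (Finset.Iic k).card) :
    ∑ x ∈ G, lam x ≤ ∑ x ∈ Finset.Iic k, lam x := by
  set F := Finset.Iic k with hF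
  have hsub : ∑ x ∈ G \ F, lam x ≤ ∑ x ∈ F \ G, lam x := by
    have hc : (G \ F).card = (F \ G).card := by
      rw [Finset.card_sdiff_comm hcard.symm]
    have hub : ∑ x ∈ G \ F, lam x ≤ (G \ F).card • lam k := by
      apply Finset.sum_le_card_nsmul
      intro x hx
      have hxF : x ∉ F := (Finset.mem_sdiff.1 hx).2
      exact h1 k x (le_of_lt (by simpa [hF, Finset.mem_Iic, not_le] using hxF))
    have hlb : (F \ G).card • lam k ≤ ∑ x ∈ F \ G, lam x := by
      apply Finset.card_nsmul_le_sum
      intro x hx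
      have hxF : x ∈ F := (Finset.mem_sdiff.1 hx).1
      exact h1 x k (by simpa [hF, Finset.mem_Iic] using hxF)
    calc ∑ x ∈ G \ F, lam x ≤ (G \ F).card • lam k := hub
      _ = (F \ G).card • lam k := by rw [hc]
      _ ≤ ∑ x ∈ F \ G, lam x := hlb
  have hG : ∑ x ∈ G, lam x = ∑ x ∈ G ∩ F, lam x + ∑ x ∈ G \ F, lam x :=
    (Finset.sum_inter_add_sum_sdiff G F lam).symm
  have hF' : ∑ x ∈ F, lam x = ∑ x ∈ F ∩ G, lam x + ∑ x ∈ F \ G, lam x :=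
    (Finset.sum_inter_add_sum_sdiff F G lam).symm
  rw [hG, hF', Finset.inter_comm]
  linarith

lemma prefix_nonneg (lam : Fin n → ℝ) (h1 : ∀ i j : Fin n, i ≤ j → lam j ≤ lam i)
    (h0 : ∀ i, 0 ≤ lam i) (σ : Equiv.Perm (Fin n)) (s : Fin n → ℝ)
    (hs : ∀ i, s i = 1 ∨ s i = -1) (k : Fin n) :
    0 ≤ ∑ j ∈ Finset.Iic k, (lam j - s (σ.symm j) * lam (σ.symm j)) := by
  rw [Finset.sum_sub_distrib]
  have step1 : ∑ j ∈ Finset.Iic k, s (σ.symm j) * lam (σ.symm j)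
      ≤ ∑ j ∈ Finset.Iic k, lam (σ.symm j) := by
    apply Finset.sum_le_sum
    intro j _
    rcases hs (σ.symm j) with h | h <;> rw [h] <;> nlinarith [h0 (σ.symm j)]
  have step2 : ∑ j ∈ Finset.Iic k, lam (σ.symm j) ≤ ∑ j ∈ Finset.Iic k, lam j := by
    have himg : ∑ j ∈ Finset.Iic k, lam (σ.symm j)
        = ∑ x ∈ (Finset.Iic k).image σ.symm, lam x := by
      rw [Finset.sum_image (fun a _ b _ h => σ.symm.injective h)]
    rw [himg]
    apply prefix_max lam h1 k
    rw [Finset.card_image_of_injective _ σ.symm.injective]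
  linarith

lemma abs_intCast_eq_natAbs (z : ℤ) : |((z : ℤ) : ℝ)| = ((z.natAbs : ℕ) : ℝ) := by
  rw [Nat.cast_natAbs, Int.cast_abs]

lemma integrality {n : ℕ} (lam : Fin n → ℝ)
    (hint : (∀ i, ∃ k : ℤ, lam i = k) ∨ (∀ i, ∃ k : ℤ, lam i = k + 1/2))
    (s : Fin n → ℝ) (hs : ∀ i, s i = 1 ∨ s i = -1) (i j : Fin n) :
    ∃ z : ℤ, lam j - s i * lam i = z := by
  rcases hint with h | h
  · obtain ⟨x, hx⟩ := h j
    obtain ⟨y, hy⟩ := h i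
    rcases hs i with hsi | hsi
    · exact ⟨x - y, by rw [hx, hy, hsi]; push_cast; ring⟩
    · exact ⟨x + y, by rw [hx, hy, hsi]; push_cast; ring⟩
  · obtain ⟨x, hx⟩ := h j
    obtain ⟨y, hy⟩ := h i
    rcases hs i with hsi | hsi
    · exact ⟨x - y, by rw [hx, hy, hsi]; push_cast; ring⟩
    · exact ⟨x + y + 1, by rw [hx, hy, hsi]; push_cast; ring⟩

theorem twisted_kostant_additivity_typeB (n : ℕ) (hn : 2 ≤ n)
    (lam mu : Fin n → ℝ) (hlam : IsDominantB n lam) (hmu : IsDominantB n mu)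
    (σ : Equiv.Perm (Fin n)) (s : Fin n → ℝ) (hs : ∀ i, s i = 1 ∨ s i = -1) :
    ∃ a b : ℕ,
      IsLeast (typeBTwistedWeights n
        (fun j => lam j - s (σ.symm j) * lam (σ.symm j))) a ∧
      IsLeast (typeBTwistedWeights n
        (fun j => mu j - s (σ.symm j) * mu (σ.symm j))) b ∧
      IsLeast (typeBTwistedWeights n
        (fun j => (lam j + mu j) - s (σ.symm j) * (lam (σ.symm j) + mu (σ.symm j))))
        (a + b) := by
  classical
  obtain ⟨hl1, hl0, hlint⟩ := hlam
  obtain ⟨hm1, hm0, hmint⟩ := hmu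
  set vl := fun j => lam j - s (σ.symm j) * lam (σ.symm j) with hvl
  set vm := fun j => mu j - s (σ.symm j) * mu (σ.symm j) with hvm
  have hmll : ∀ j, ∃ z : ℤ, vl j = z := fun j => integrality lam hlint s hs _ j
  have hmlm : ∀ j, ∃ z : ℤ, vm j = z := fun j => integrality mu hmint s hs _ j
  choose ml hml using hmll
  choose mm hmm using hmlm
  have hcastl : (fun j => ((ml j : ℤ) : ℝ)) = vl := funext fun j => (hml j).symm
  have hcastm : (fun j => ((mm j : ℤ) : ℝ)) = vm := funext fun j => (hmm j).symm
  have hprel : ∀ k : Fin n, 0 ≤ ∑ i ∈ Finset.Iic k, ml i := by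
    intro k
    have h1 : (0:ℝ) ≤ ∑ i ∈ Finset.Iic k, ((ml i : ℤ) : ℝ) := by
      rw [Finset.sum_congr rfl (fun i _ => (hml i).symm)]
      exact prefix_nonneg lam hl1 hl0 σ s hs k
    exact_mod_cast h1
  have hprem : ∀ k : Fin n, 0 ≤ ∑ i ∈ Finset.Iic k, mm i := by
    intro k
    have h1 : (0:ℝ) ≤ ∑ i ∈ Finset.Iic k, ((mm i : ℤ) : ℝ) := by
      rw [Finset.sum_congr rfl (fun i _ => (hmm i).symm)]
      exact prefix_nonneg mu hm1 hm0 σ s hs k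
    exact_mod_cast h1
  set a := ∑ i, (ml i).natAbs with ha
  set b := ∑ i, (mm i).natAbs with hb
  have hmema : a ∈ typeBTwistedWeights n vl := by
    have := attain a ml rfl hprel
    rwa [hcastl] at this
  have hmemb : b ∈ typeBTwistedWeights n vm := by
    have := attain b mm rfl hprem
    rwa [hcastm] at this
  have habsl : ∑ j, |vl j| = (a : ℝ) := by
    rw [ha]
    push_cast
    apply Finset.sum_congr rfl
    intro j _
    rw [hml j, abs_intCast_eq_natAbs]
  have habsm : ∑ j, |vm j| = (b : ℝ) := by
    rw [hb]
    push_cast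
    apply Finset.sum_congr rfl
    intro j _
    rw [hmm j, abs_intCast_eq_natAbs]
  -- sign compatibility
  have hsign : ∀ j, (0 ≤ vl j ∧ 0 ≤ vm j) ∨ (vl j ≤ 0 ∧ vm j ≤ 0) := by
    intro j
    rcases hs (σ.symm j) with h | h
    · rcases le_total j (σ.symm j) with hj | hj
      · left
        constructor
        · have := hl1 j (σ.symm j) hj
          simp only [hvl, h]
          linarith
        · have := hm1 j (σ.symm j) hj
          simp only [hvm, h]
          linarith
      · right
        constructor
        · have := hl1 (σ.symm j) j hj
          simp only [hvl, h]
          linarith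
        · have := hm1 (σ.symm j) j hj
          simp only [hvm, h]
          linarith
    · left
      constructor
      · have := hl0 j; have := hl0 (σ.symm j)
        simp only [hvl, h]
        linarith
      · have := hm0 j; have := hm0 (σ.symm j)
        simp only [hvm, h]
        linarith
  have habs_add : ∀ j, |vl j + vm j| = |vl j| + |vm j| := by
    intro j
    rcases hsign j with ⟨h1, h2⟩ | ⟨h1, h2⟩
    · rw [abs_of_nonneg h1, abs_of_nonneg h2, abs_of_nonneg (by linarith)]
    · rw [abs_of_nonpos h1, abs_of_nonpos h2, abs_of_nonpos (by linarith)]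
      ring
  have hvsum : (fun j => (lam j + mu j) - s (σ.symm j) * (lam (σ.symm j) + mu (σ.symm j)))
      = vl + vm := by
    funext j
    simp only [hvl, hvm, Pi.add_apply]
    ring
  refine ⟨a, b, ⟨hmema, ?_⟩, ⟨hmemb, ?_⟩, ?_⟩
  · intro N hN
    have h1 := l1_lower vl N hN
    rw [habsl] at h1
    exact_mod_cast h1
  · intro N hN
    have h1 := l1_lower vm N hN
    rw [habsm] at h1
    exact_mod_cast h1
  · rw [hvsum]
    constructor
    · exact mem_add hmema hmemb
    · intro N hN
      have h1 := l1_lower (vl + vm) N hN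
      have h2 : ∑ j, |(vl + vm) j| = (a : ℝ) + (b : ℝ) := by
        simp only [Pi.add_apply]
        rw [Finset.sum_congr rfl (fun j _ => habs_add j), Finset.sum_add_distrib,
          habsl, habsm]
      rw [h2] at h1
      exact_mod_cast h1
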